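/- For the CDPIC(1,K) problem with M messages and C = M clients, if ⌊(M+2)/3⌋ < K < ⌊M/2⌋, the two coded transmissions X_1 ⊕ X_K (from client C_0) and X_{M−2K+2} ⊕ X_{M−K+1} (from client C_{M−2K+1}) satisfy every client with one new message: each of the M clients possesses exactly one of the two messages in at least one of the two transmitted pairs while lacking the other. -/

import Mathlib

/-- Client `i` possesses message `x` iff `x` lies in the circular window
`{i, i+1, ..., i+K-1}` of `Z/MZ`. -/
def window (M K : ℕ) (i x : ZMod M) : Prop := (x - i).val < K

/-- CDPIC(1,K) with `M` messages, `C = M` clients and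
`⌊(M+2)/3⌋ < K < ⌊M/2⌋`: the two coded transmissions `X_1 ⊕ X_K` and
`X_{M-2K+2} ⊕ X_{M-K+1}` satisfy every client with one new message: every
client possesses exactly one message of at least one of the two transmitted
pairs. -/
theorem two_coded_transmissions_suffice (M K : ℕ) [NeZero M]
    (h1 : (M + 2) / 3 < K) (h2 : K < M / 2) :
    ∀ i : ZMod M,
      Xor' (window M K i ((1 : ℕ) : ZMod M)) (window M K i ((K : ℕ) : ZMod M)) ∨
      Xor' (window M K i ((M - 2 * K + 2 : ℕ) : ZMod M))
           (window M K i ((M - K + 1 : ℕ) : ZMod M)) := by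
  intro i
  have hM : 0 < M := NeZero.pos M
  have hnM : i.val < M := ZMod.val_lt i
  set n := i.val with hn
  have key : ∀ a : ℕ, (window M K i (a : ZMod M) ↔ (a + M - n) % M < K) := by
    intro a
    have hcast : ((a : ZMod M) - i) = ((a + M - n : ℕ) : ZMod M) := by
      have h0 : ((a + M - n : ℕ) : ZMod M) = (a : ZMod M) + (M : ZMod M) - (n : ZMod M) := by
        push_cast [Nat.cast_sub (by omega : n ≤ a + M)]
        ring
      rw [h0, ZMod.natCast_self, hn, ZMod.natCast_val, ZMod.cast_id]
      ring
    unfold window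
    rw [hcast, ZMod.val_natCast]
  rw [key 1, key K, key (M - 2 * K + 2), key (M - K + 1)]
  have m2 : ∀ t : ℕ, t < 2 * M → (t % M = t ∧ t < M) ∨ (t % M = t - M ∧ M ≤ t) := by
    intro t ht
    rcases Nat.lt_or_ge t M with h | h
    · exact Or.inl ⟨Nat.mod_eq_of_lt h, h⟩
    · right
      refine ⟨?_, h⟩
      rw [Nat.mod_eq_sub_mod h, Nat.mod_eq_of_lt (by omega)]
  rcases m2 (1 + M - n) (by omega) with hA | hA <;>
  rcases m2 (K + M - n) (by omega) with hB | hB <;>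
  rcases m2 (M - 2 * K + 2 + M - n) (by omega) with hC | hC <;>
  rcases m2 (M - K + 1 + M - n) (by omega) with hD | hD <;>
  simp only [Xor', Xor] <;> omega
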